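/- Let β > 0 and s ≥ 1. Let Λ ⊆ Λ_s := {−s,…,s} be finite and for each y ∈ Λ let F_y, G_y ∈ L²(ℙ⋆_β) be cylinder functions, and set φ := Σ_{y∈Λ} ( ∇_y F_y + ∇_{y,y+1} G_y ), assumed measurable with respect to {(m_z, ω_z) : z ∈ Λ_s}. Set K := (2s+1)·( √(2/γ)·sup_{y∈Λ} ‖F_y‖_{L²(ℙ⋆_β)} + √(2/λ)·sup_{y∈Λ} ‖G_y‖_{L²(ℙ⋆_β)} ). Then for every integer ℓ ≥ s+1, writing ℓ_φ := ℓ − s − 1, and for every h ∈ L²(ℙ⋆_β) measurable with respect to {(m_z, ω_z) : z ∈ Λ_ℓ}: | 𝔼⋆_β[ (Σ_{|x| ≤ ℓ_φ} τ_x φ) · h ] | ≤ K · (2ℓ_φ + 1)^{1/2} · ( D_ℓ(ℙ⋆_β; h) )^{1/2}, where D_ℓ(ℙ⋆_β; h) := Σ_{x∈Λ_ℓ} { (γ/2)𝔼⋆_β[(∇_x h)²] + (λ/2)𝔼⋆_β[(∇_{x,x+1} h)²] }. -/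

import Mathlib

open MeasureTheory ProbabilityTheory Filter

noncomputable section

/-- Flip of the coordinate at site `x`. -/
def flipAt (x : ℤ) (ω : ℤ → ℝ) : ℤ → ℝ := Function.update ω x (-(ω x))

/-- Exchange of the coordinates at sites `x` and `x+1`. -/
def exchAt (x : ℤ) (ω : ℤ → ℝ) : ℤ → ℝ :=
  fun z => if z = x then ω (x + 1) else if z = x + 1 then ω x else ω z

/-- Translation by `x` of a function of the disorder and the configuration. -/
def tau (x : ℤ) (f : (ℤ → ℝ) → (ℤ → ℝ) → ℝ) : (ℤ → ℝ) → (ℤ → ℝ) → ℝ :=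
  fun m ω => f (fun z => m (x + z)) (fun z => ω (x + z))

/-- Antisymmetric (Hamiltonian) part `A^m` of the generator (the sum has finitely
many nonzero terms on cylinder functions). -/
def Agen (f : (ℤ → ℝ) → (ℤ → ℝ) → ℝ) : (ℤ → ℝ) → (ℤ → ℝ) → ℝ :=
  fun m ω => ∑' x : ℤ,
    (ω (x + 1) / Real.sqrt (m x * m (x + 1)) - ω (x - 1) / Real.sqrt (m (x - 1) * m x)) *
      deriv (fun t => f m (Function.update ω x t)) (ω x)

/-- Flip part of the noise. -/
def Sflip (f : (ℤ → ℝ) → (ℤ → ℝ) → ℝ) : (ℤ → ℝ) → (ℤ → ℝ) → ℝ :=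
  fun m ω => ∑' x : ℤ, (f m (flipAt x ω) - f m ω)

/-- Exchange part of the noise. -/
def Sexch (f : (ℤ → ℝ) → (ℤ → ℝ) → ℝ) : (ℤ → ℝ) → (ℤ → ℝ) → ℝ :=
  fun m ω => ∑' x : ℤ, (f m (exchAt x ω) - f m ω)

/-- Symmetric part `S = γ S^flipAt + λ S^exchAt` of the generator. -/
def Sgen (gam lam : ℝ) (f : (ℤ → ℝ) → (ℤ → ℝ) → ℝ) : (ℤ → ℝ) → (ℤ → ℝ) → ℝ :=
  fun m ω => gam * Sflip f m ω + lam * Sexch f m ω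

/-- The full generator `L^m = A^m + γ S^flipAt + λ S^exchAt`. -/
def Lgen (gam lam : ℝ) (f : (ℤ → ℝ) → (ℤ → ℝ) → ℝ) : (ℤ → ℝ) → (ℤ → ℝ) → ℝ :=
  fun m ω => Agen f m ω + Sgen gam lam f m ω

/-- `f` depends only on the coordinates (disorder and configuration) in `s`. -/
def CylOn (f : (ℤ → ℝ) → (ℤ → ℝ) → ℝ) (s : Finset ℤ) : Prop :=
  ∀ m ω m' ω', (∀ z ∈ s, m z = m' z) → (∀ z ∈ s, ω z = ω' z) → f m ω = f m' ω'

/-- The class `Q` of quadratic cylinder functions. -/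
structure Quad where
  ψ : ℤ → ℤ → (ℤ → ℝ) → ℝ
  symm : ∀ i j, ψ i j = ψ j i
  finsupp : {p : ℤ × ℤ | ψ p.1 p.2 ≠ 0}.Finite
  meas : ∀ i j, Measurable (ψ i j)
  bdd : ∀ i j, ∃ K : ℝ, ∀ m, |ψ i j m| ≤ K
  cyl : ∀ i j, ∃ s : Finset ℤ, ∀ m m', (∀ z ∈ s, m z = m' z) → ψ i j m = ψ i j m'

/-- Evaluation of an element of `Q`:
`f(m,ω) = Σ_i ψ_{i,i}(m)(ω_{i+1}² − ω_i²) + Σ_{i≠j} ψ_{i,j}(m) ω_i ω_j`. -/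
def Quad.eval (f : Quad) : (ℤ → ℝ) → (ℤ → ℝ) → ℝ :=
  fun m ω => ∑' p : ℤ × ℤ,
    if p.1 = p.2 then f.ψ p.1 p.1 m * (ω (p.1 + 1) ^ 2 - ω p.1 ^ 2)
    else f.ψ p.1 p.2 m * (ω p.1 * ω p.2)

/-- Expectation `𝔼⋆` with respect to `ℙ⋆ = P ⊗ μ`. -/
def Estar (P μ : Measure (ℤ → ℝ)) (f : (ℤ → ℝ) → (ℤ → ℝ) → ℝ) : ℝ :=
  ∫ p, f p.1 p.2 ∂(P.prod μ)

/-- `≪f, g≫_⋆ = Σ_{x∈ℤ} 𝔼⋆[f · τ_x g]`. -/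
def innerStar (P μ : Measure (ℤ → ℝ)) (f g : (ℤ → ℝ) → (ℤ → ℝ) → ℝ) : ℝ :=
  ∑' x : ℤ, Estar P μ (fun m ω => f m ω * tau x g m ω)

/-- `≪f≫_⋆⋆ = Σ_{x∈ℤ} x · 𝔼⋆[f · ω_x²]`. -/
def starstar (P μ : Measure (ℤ → ℝ)) (f : (ℤ → ℝ) → (ℤ → ℝ) → ℝ) : ℝ :=
  ∑' x : ℤ, (x : ℝ) * Estar P μ (fun m ω => f m ω * ω x ^ 2)

/-- `∇₀(Γ_g) = Σ_{x∈ℤ} ∇₀(τ_x g)`. -/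
def grad0Gamma (g : (ℤ → ℝ) → (ℤ → ℝ) → ℝ) : (ℤ → ℝ) → (ℤ → ℝ) → ℝ :=
  fun m ω => ∑' x : ℤ, (tau x g m (flipAt 0 ω) - tau x g m ω)

/-- `∇_{0,1}(Γ_g) = Σ_{x∈ℤ} ∇_{0,1}(τ_x g)`. -/
def grad01Gamma (g : (ℤ → ℝ) → (ℤ → ℝ) → ℝ) : (ℤ → ℝ) → (ℤ → ℝ) → ℝ :=
  fun m ω => ∑' x : ℤ, (tau x g m (exchAt 0 ω) - tau x g m ω)

/-- The seminorm `⦀φ⦀₁²`, defined through a variational formula. -/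
def norm1sq (P μ : Measure (ℤ → ℝ)) (gam lam : ℝ) (φ : (ℤ → ℝ) → (ℤ → ℝ) → ℝ) : ℝ :=
  sSup { v : ℝ | ∃ (g : Quad) (a : ℝ),
    v = 2 * innerStar P μ φ g.eval + 2 * a * starstar P μ φ
      - gam / 2 * Estar P μ (fun m ω => grad0Gamma g.eval m ω ^ 2)
      - lam / 2 * Estar P μ (fun m ω => (a * (ω 1 ^ 2 - ω 0 ^ 2) + grad01Gamma g.eval m ω) ^ 2) }

/-- The seminorm `⦀φ⦀₁`. -/
def norm1 (P μ : Measure (ℤ → ℝ)) (gam lam : ℝ) (φ : (ℤ → ℝ) → (ℤ → ℝ) → ℝ) : ℝ :=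
  Real.sqrt (norm1sq P μ gam lam φ)

/-- Antisymmetric part of the energy current: `j^A_{0,1}(m,ω) = 2ω₀ω₁/√(m₀m₁)`. -/
def jA : (ℤ → ℝ) → (ℤ → ℝ) → ℝ := fun m ω => 2 * ω 0 * ω 1 / Real.sqrt (m 0 * m 1)

/-- Symmetric part of the energy current: `j^S_{0,1}(ω) = λ(ω₁² − ω₀²)`. -/
def jS (lam : ℝ) : (ℤ → ℝ) → (ℤ → ℝ) → ℝ := fun _ ω => lam * (ω 1 ^ 2 - ω 0 ^ 2)

/-- The energy current `j_{0,1} = j^A_{0,1} + j^S_{0,1}`. -/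
def jcur (lam : ℝ) : (ℤ → ℝ) → (ℤ → ℝ) → ℝ := fun m ω => jA m ω + jS lam m ω

/-- `μ` is the i.i.d. product over `ℤ` of the one-site measure `κ`:
all finite-dimensional marginals of `μ` are finite products of `κ`. -/
def IsIIDProduct (μ : Measure (ℤ → ℝ)) (κ : Measure ℝ) : Prop :=
  ∀ s : Finset ℤ, μ.map (fun ω (i : s) => ω i.1) = Measure.pi (fun _ : s => κ)


section Aux

variable {κ : Measure ℝ} {μ : Measure (ℤ → ℝ)}

lemma measurable_restrict' (t : Finset ℤ) : Measurable (fun ω : ℤ → ℝ => fun i : t => ω i.1) :=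
  measurable_pi_lambda _ fun i => measurable_pi_apply _

lemma iid_unique [IsProbabilityMeasure μ] {μ' : Measure (ℤ → ℝ)} [IsProbabilityMeasure μ']
    (h : IsIIDProduct μ κ) (h' : IsIIDProduct μ' κ) : μ = μ' := by
  refine ext_of_generate_finite (measurableCylinders (fun _ : ℤ => ℝ))
    generateFrom_measurableCylinders.symm isPiSystem_measurableCylinders ?_ (by simp)
  intro u hu
  obtain ⟨t, S, hS, rfl⟩ := (mem_measurableCylinders u).1 hu
  have e : ∀ ν : Measure (ℤ → ℝ), IsIIDProduct ν κ →
      ν (cylinder t S) = Measure.pi (fun _ : t => κ) S := by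
    intro ν hν
    rw [← hν t, Measure.map_apply (measurable_restrict' t) hS]
    rfl
  rw [e μ h, e μ' h']

lemma iid_map [IsProbabilityMeasure κ] (hμ : IsIIDProduct μ κ)
    (e : ℤ → ℤ) (he : Function.Injective e) (σ : ℤ → ℝ → ℝ)
    (hσm : ∀ z, Measurable (σ z)) (hσ : ∀ z, κ.map (σ z) = κ) :
    IsIIDProduct (μ.map (fun ω z => σ z (ω (e z)))) κ := by
  intro t
  have hT : Measurable (fun ω : ℤ → ℝ => fun z => σ z (ω (e z))) :=
    measurable_pi_lambda _ fun z => (hσm z).comp (measurable_pi_apply _)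
  classical
  set u : Finset ℤ := t.image e with hu
  have hmem : ∀ i : t, e i.1 ∈ u := fun i => Finset.mem_image_of_mem e i.2
  set b : t → u := fun i => ⟨e i.1, hmem i⟩ with hb
  have hbij : Function.Bijective b := by
    constructor
    · intro i j hij
      exact Subtype.ext (he (congrArg Subtype.val hij))
    · rintro ⟨w, hw⟩
      obtain ⟨i, hi, rfl⟩ := Finset.mem_image.1 hw
      exact ⟨⟨i, hi⟩, rfl⟩
  set g : (u → ℝ) → (t → ℝ) := fun v i => σ i.1 (v (b i)) with hg
  have hgm : Measurable g :=
    measurable_pi_lambda _ fun i => (hσm i.1).comp (measurable_pi_apply _)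
  have hcomp : (fun ω : ℤ → ℝ => fun i : t => ω i.1) ∘ (fun ω z => σ z (ω (e z)))
      = g ∘ (fun ω : ℤ → ℝ => fun j : u => ω j.1) := rfl
  rw [Measure.map_map (measurable_restrict' t) hT, hcomp,
    ← Measure.map_map hgm (measurable_restrict' u), hμ u]
  set E := Equiv.ofBijective b hbij with hE
  refine (Measure.pi_eq ?_).symm
  intro S hS
  have hpre : g ⁻¹' (Set.univ.pi S)
      = Set.univ.pi (fun j : u => σ (E.symm j).1 ⁻¹' S (E.symm j)) := by
    ext v
    simp only [Set.mem_preimage, Set.mem_univ_pi]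
    constructor
    · intro hv j
      have h2 := hv (E.symm j)
      have h3 : b (E.symm j) = j := E.apply_symm_apply j
      have h2' : σ (E.symm j).1 (v (b (E.symm j))) ∈ S (E.symm j) := h2
      rwa [h3] at h2'
    · intro hv i
      have h2 := hv (E i)
      have h3 : E.symm (E i) = i := E.symm_apply_apply i
      rw [h3] at h2
      exact h2
  rw [Measure.map_apply hgm (MeasurableSet.univ_pi hS), hpre, Measure.pi_pi]
  calc ∏ j : u, κ (σ (E.symm j).1 ⁻¹' S (E.symm j))
      = ∏ j : u, (κ.map (σ (E.symm j).1)) (S (E.symm j)) := by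
        refine Finset.prod_congr rfl fun j _ => ?_
        rw [Measure.map_apply (hσm _) (hS _)]
    _ = ∏ j : u, κ (S (E.symm j)) := by simp_rw [hσ]
    _ = ∏ i : t, κ (S i) := Equiv.prod_comp E.symm (fun i => κ (S i))

lemma iid_map_eq [IsProbabilityMeasure κ] [IsProbabilityMeasure μ] (hμ : IsIIDProduct μ κ)
    (e : ℤ → ℤ) (he : Function.Injective e) (σ : ℤ → ℝ → ℝ)
    (hσm : ∀ z, Measurable (σ z)) (hσ : ∀ z, κ.map (σ z) = κ) :
    μ.map (fun ω z => σ z (ω (e z))) = μ := by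
  have hT : Measurable (fun ω : ℤ → ℝ => fun z => σ z (ω (e z))) :=
    measurable_pi_lambda _ fun z => (hσm z).comp (measurable_pi_apply _)
  haveI : IsProbabilityMeasure (μ.map (fun ω z => σ z (ω (e z)))) :=
    Measure.isProbabilityMeasure_map hT.aemeasurable
  exact iid_unique (iid_map hμ e he σ hσm hσ) hμ

lemma flipAt_eq (x : ℤ) (ω : ℤ → ℝ) : flipAt x ω = fun z => if z = x then -(ω x) else ω z := by
  funext z
  simp [flipAt, Function.update_apply]

lemma measurable_flipAt (x : ℤ) : Measurable (flipAt x) := by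
  have h0 : flipAt x = fun ω : ℤ → ℝ => fun z => if z = x then -(ω x) else ω z := by
    funext ω; rw [flipAt_eq]
  rw [h0]
  refine measurable_pi_lambda _ fun z => ?_
  by_cases h : z = x
  · simp only [if_pos h]
    exact (measurable_pi_apply x).neg
  · simp only [if_neg h]
    exact measurable_pi_apply z

lemma measurable_exchAt (x : ℤ) : Measurable (exchAt x) := by
  refine measurable_pi_lambda _ fun z => ?_
  unfold exchAt
  by_cases h1 : z = x <;> by_cases h2 : z = x + 1 <;>
    simp only [h1, h2, if_true, if_false] <;>
    first
      | exact measurable_pi_apply _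
      | (split_ifs <;> exact measurable_pi_apply _)

lemma gauss_neg (v : NNReal) :
    (gaussianReal 0 v).map (fun r : ℝ => -r) = gaussianReal 0 v := by
  have h1 : (fun r : ℝ => -r) = ((-1 : ℝ) * ·) := by funext r; ring
  rw [h1, gaussianReal_map_const_mul]
  have h2 : (⟨(-1:ℝ)^2, sq_nonneg _⟩ : NNReal) = 1 := by ext; norm_num
  rw [mul_zero]
  convert rfl using 2
  ext
  simp

lemma flip_preserving [IsProbabilityMeasure μ] {v : NNReal}
    (hμ : IsIIDProduct μ (gaussianReal 0 v)) (x : ℤ) :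
    MeasurePreserving (flipAt x) μ μ := by
  classical
  refine ⟨measurable_flipAt x, ?_⟩
  have h1 : flipAt x = fun ω : ℤ → ℝ => fun z =>
      (if z = x then (fun r : ℝ => -r) else id) (ω (id z)) := by
    funext ω z
    rw [flipAt_eq]
    by_cases h : z = x <;> simp [h]
  rw [h1]
  refine iid_map_eq hμ id Function.injective_id _ (fun z => ?_) (fun z => ?_)
  · by_cases h : z = x
    · simp only [if_pos h]
      exact measurable_id.neg
    · simp only [if_neg h]
      exact measurable_id
  · by_cases h : z = x
    · simp only [if_pos h]
      exact gauss_neg v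
    · simp only [if_neg h]
      exact Measure.map_id

lemma exch_preserving [IsProbabilityMeasure κ] [IsProbabilityMeasure μ]
    (hμ : IsIIDProduct μ κ) (x : ℤ) :
    MeasurePreserving (exchAt x) μ μ := by
  refine ⟨measurable_exchAt x, ?_⟩
  have h1 : exchAt x = fun ω : ℤ → ℝ => fun z =>
      (fun _ : ℤ => (id : ℝ → ℝ)) z (ω (Equiv.swap x (x+1) z)) := by
    funext ω z
    by_cases h1 : z = x <;> by_cases h2 : z = x + 1 <;>
      simp [exchAt, Equiv.swap_apply_def, h1, h2]
  rw [h1]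
  exact iid_map_eq hμ _ (Equiv.swap x (x+1)).injective _
    (fun _ => measurable_id) (fun _ => Measure.map_id)

lemma trans_preserving [IsProbabilityMeasure κ] [IsProbabilityMeasure μ]
    (hμ : IsIIDProduct μ κ) (x : ℤ) :
    MeasurePreserving (fun ω : ℤ → ℝ => fun z => ω (x + z)) μ μ := by
  refine ⟨measurable_pi_lambda _ fun z => measurable_pi_apply _, ?_⟩
  exact iid_map_eq hμ (fun z => x + z) (fun a b hab => by simpa using hab) (fun _ => id)
    (fun _ => measurable_id) (fun _ => Measure.map_id)

end Aux

section Aux2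

variable {α : Type*} [MeasurableSpace α] {ρ : Measure α}

lemma inner_toLp_eq {f g : α → ℝ} (hf : MemLp f 2 ρ) (hg : MemLp g 2 ρ) :
    (inner ℝ (hf.toLp f) (hg.toLp g) : ℝ) = ∫ a, f a * g a ∂ρ := by
  rw [MeasureTheory.L2.inner_def]
  refine integral_congr_ae ?_
  filter_upwards [hf.coeFn_toLp, hg.coeFn_toLp] with a ha hb
  rw [ha, hb]
  simp [RCLike.inner_apply, conj_trivial, mul_comm]

lemma sq_eLpNorm_eq {f : α → ℝ} (hf : MemLp f 2 ρ) :
    (eLpNorm f 2 ρ).toReal ^ 2 = ∫ a, f a ^ 2 ∂ρ := by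
  have h1 : (eLpNorm f 2 ρ).toReal = ‖hf.toLp f‖ := (Lp.norm_toLp f hf).symm
  rw [h1, ← real_inner_self_eq_norm_sq, inner_toLp_eq hf hf]
  refine integral_congr_ae (Filter.Eventually.of_forall fun a => ?_)
  ring

lemma abs_integral_mul_le {f g : α → ℝ} (hf : MemLp f 2 ρ) (hg : MemLp g 2 ρ) :
    |∫ a, f a * g a ∂ρ| ≤ (eLpNorm f 2 ρ).toReal * (eLpNorm g 2 ρ).toReal := by
  rw [← inner_toLp_eq hf hg, ← Lp.norm_toLp f hf, ← Lp.norm_toLp g hg]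
  exact abs_real_inner_le_norm _ _

lemma integrable_mul_L2 {f g : α → ℝ} (hf : MemLp f 2 ρ) (hg : MemLp g 2 ρ) :
    Integrable (fun a => f a * g a) ρ := by
  have h := MeasureTheory.L2.integrable_inner (𝕜 := ℝ) (hf.toLp f) (hg.toLp g)
  refine h.congr ?_
  filter_upwards [hf.coeFn_toLp, hg.coeFn_toLp] with a ha hb
  rw [ha, hb]
  simp [RCLike.inner_apply, conj_trivial, mul_comm]

lemma key_step [IsProbabilityMeasure ρ] {Φ : α → α}
    (hΦ : MeasurePreserving Φ ρ ρ) (hinv : ∀ p, Φ (Φ p) = p)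
    {f h : α → ℝ} (hf : MemLp f 2 ρ) (hh : MemLp h 2 ρ) :
    |∫ p, (f (Φ p) - f p) * h p ∂ρ|
      ≤ (eLpNorm f 2 ρ).toReal * (eLpNorm (fun p => h (Φ p) - h p) 2 ρ).toReal := by
  have hfΦ : MemLp (fun p => f (Φ p)) 2 ρ := hf.comp_measurePreserving hΦ
  have hhΦ : MemLp (fun p => h (Φ p)) 2 ρ := hh.comp_measurePreserving hΦ
  have hE : MeasurableEmbedding Φ := by
    let e : α ≃ᵐ α :=
      ⟨⟨Φ, Φ, hinv, hinv⟩, hΦ.measurable, hΦ.measurable⟩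
    exact e.measurableEmbedding
  have e1 : ∫ p, f (Φ p) * h p ∂ρ = ∫ p, f p * h (Φ p) ∂ρ := by
    have h2 := hΦ.integral_comp hE (fun q => f q * h (Φ q))
    rw [← h2]
    refine integral_congr_ae (Filter.Eventually.of_forall fun p => ?_)
    simp only [hinv p]
  have i1 : Integrable (fun p => f (Φ p) * h p) ρ := integrable_mul_L2 hfΦ hh
  have i2 : Integrable (fun p => f p * h p) ρ := integrable_mul_L2 hf hh
  have i3 : Integrable (fun p => f p * h (Φ p)) ρ := integrable_mul_L2 hf hhΦ
  have isub : ∫ p, (f (Φ p) - f p) * h p ∂ρ = ∫ p, f p * (h (Φ p) - h p) ∂ρ := by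
    calc ∫ p, (f (Φ p) - f p) * h p ∂ρ
        = ∫ p, (f (Φ p) * h p - f p * h p) ∂ρ := by
          refine integral_congr_ae (Filter.Eventually.of_forall fun p => ?_); ring
      _ = (∫ p, f (Φ p) * h p ∂ρ) - ∫ p, f p * h p ∂ρ := integral_sub i1 i2
      _ = (∫ p, f p * h (Φ p) ∂ρ) - ∫ p, f p * h p ∂ρ := by rw [e1]
      _ = ∫ p, (f p * h (Φ p) - f p * h p) ∂ρ := (integral_sub i3 i2).symm
      _ = ∫ p, f p * (h (Φ p) - h p) ∂ρ := by
          refine integral_congr_ae (Filter.Eventually.of_forall fun p => ?_); ring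
  rw [isub]
  exact abs_integral_mul_le hf (hhΦ.sub hh)

lemma biSup_bounds {c : ℤ → ℝ} (hc : ∀ y, 0 ≤ c y) (Λ : Finset ℤ) :
    (∀ y ∈ Λ, c y ≤ ⨆ y ∈ Λ, c y) ∧ 0 ≤ ⨆ y ∈ Λ, c y := by
  classical
  have hgle : ∀ y : ℤ, (⨆ _ : y ∈ Λ, c y) ≤ ∑ y' ∈ Λ, c y' := by
    intro y
    by_cases hy : y ∈ Λ
    · rw [ciSup_pos hy]
      exact Finset.single_le_sum (fun i _ => hc i) hy
    · haveI : IsEmpty (y ∈ Λ) := ⟨hy⟩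
      rw [Real.iSup_of_isEmpty]
      exact Finset.sum_nonneg fun i _ => hc i
  have hbdd : BddAbove (Set.range fun y : ℤ => ⨆ _ : y ∈ Λ, c y) := by
    refine ⟨∑ y' ∈ Λ, c y', ?_⟩
    rintro v ⟨y, rfl⟩
    exact hgle y
  have hg0 : ∀ y : ℤ, 0 ≤ ⨆ _ : y ∈ Λ, c y := by
    intro y
    by_cases hy : y ∈ Λ
    · rw [ciSup_pos hy]; exact hc y
    · haveI : IsEmpty (y ∈ Λ) := ⟨hy⟩
      rw [Real.iSup_of_isEmpty]
  constructor
  · intro y hy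
    have := le_ciSup hbdd y
    rwa [ciSup_pos hy] at this
  · exact le_trans (hg0 0) (le_ciSup hbdd 0)

end Aux2

section Aux3

lemma flip_tau (x y : ℤ) (ω : ℤ → ℝ) :
    flipAt y (fun z => ω (x + z)) = fun z => flipAt (x + y) ω (x + z) := by
  funext z
  rw [flipAt_eq, flipAt_eq]
  by_cases h : z = y
  · simp [h]
  · have h2 : x + z ≠ x + y := by omega
    simp [h, h2]

lemma exch_tau (x y : ℤ) (ω : ℤ → ℝ) :
    exchAt y (fun z => ω (x + z)) = fun z => exchAt (x + y) ω (x + z) := by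
  funext z
  simp only [exchAt]
  by_cases h1 : z = y
  · have e1 : x + z = x + y := by omega
    simp only [if_pos h1, if_pos e1]
    congr 1
    omega
  · by_cases h2 : z = y + 1
    · have e1 : x + z ≠ x + y := by omega
      have e2 : x + z = x + y + 1 := by omega
      simp only [if_neg h1, if_pos h2, if_neg e1, if_pos e2]
    · have e1 : x + z ≠ x + y := by omega
      have e2 : x + z ≠ x + y + 1 := by omega
      simp only [if_neg h1, if_neg h2, if_neg e1, if_neg e2]

lemma sum_bound (I Λ L : Finset ℤ) (hsub : ∀ x ∈ I, ∀ y ∈ Λ, x + y ∈ L)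
    (a : ℤ → ℝ) (ha0 : ∀ z, 0 ≤ a z) (M : ℝ) (hM : 0 ≤ M) :
    ∑ x ∈ I, ∑ y ∈ Λ, M * a (x + y)
      ≤ (Λ.card : ℝ) * M * Real.sqrt (I.card : ℝ) * Real.sqrt (∑ z ∈ L, a z ^ 2) := by
  classical
  rw [Finset.sum_comm]
  have hyb : ∀ y ∈ Λ, (∑ x ∈ I, M * a (x + y))
      ≤ M * (Real.sqrt (I.card : ℝ) * Real.sqrt (∑ z ∈ L, a z ^ 2)) := by
    intro y hy
    rw [← Finset.mul_sum]
    refine mul_le_mul_of_nonneg_left ?_ hM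
    have h2 : ∑ x ∈ I, a (x + y) ^ 2 ≤ ∑ z ∈ L, a z ^ 2 := by
      have himg : ∑ z ∈ I.image (fun x => x + y), a z ^ 2 = ∑ x ∈ I, a (x + y) ^ 2 :=
        Finset.sum_image (fun p _ q _ hpq => by omega)
      rw [← himg]
      refine Finset.sum_le_sum_of_subset_of_nonneg ?_ (fun i _ _ => sq_nonneg _)
      intro z hz
      obtain ⟨x, hx, rfl⟩ := Finset.mem_image.1 hz
      exact hsub x hx y hy
    have h1 : (∑ x ∈ I, a (x + y)) ^ 2 ≤ (I.card : ℝ) * ∑ x ∈ I, a (x + y) ^ 2 :=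
      sq_sum_le_card_mul_sum_sq
    have h3 : 0 ≤ ∑ x ∈ I, a (x + y) := Finset.sum_nonneg fun i _ => ha0 _
    calc (∑ x ∈ I, a (x + y))
        = Real.sqrt ((∑ x ∈ I, a (x + y)) ^ 2) := (Real.sqrt_sq h3).symm
      _ ≤ Real.sqrt ((I.card : ℝ) * ∑ z ∈ L, a z ^ 2) := by
          refine Real.sqrt_le_sqrt (le_trans h1 ?_)
          exact mul_le_mul_of_nonneg_left h2 (by positivity)
      _ = Real.sqrt (I.card : ℝ) * Real.sqrt (∑ z ∈ L, a z ^ 2) :=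
          Real.sqrt_mul (by positivity) _
  calc ∑ y ∈ Λ, ∑ x ∈ I, M * a (x + y)
      ≤ ∑ _y ∈ Λ, M * (Real.sqrt (I.card : ℝ) * Real.sqrt (∑ z ∈ L, a z ^ 2)) :=
        Finset.sum_le_sum hyb
    _ = (Λ.card : ℝ) * M * Real.sqrt (I.card : ℝ) * Real.sqrt (∑ z ∈ L, a z ^ 2) := by
        rw [Finset.sum_const, nsmul_eq_mul]; ring

/-- Auxiliary: the flip summand appearing in the expansion of `τ_x φ · h`. -/
def termF (F : ℤ → (ℤ → ℝ) → (ℤ → ℝ) → ℝ) (h : (ℤ → ℝ) → (ℤ → ℝ) → ℝ) (x y : ℤ)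
    (p : (ℤ → ℝ) × (ℤ → ℝ)) : ℝ :=
  (F y (fun z => p.1 (x + z)) (fun z => flipAt (x + y) p.2 (x + z))
    - F y (fun z => p.1 (x + z)) (fun z => p.2 (x + z))) * h p.1 p.2

/-- Auxiliary: the exchange summand appearing in the expansion of `τ_x φ · h`. -/
def termG (G : ℤ → (ℤ → ℝ) → (ℤ → ℝ) → ℝ) (h : (ℤ → ℝ) → (ℤ → ℝ) → ℝ) (x y : ℤ)
    (p : (ℤ → ℝ) × (ℤ → ℝ)) : ℝ :=
  (G y (fun z => p.1 (x + z)) (fun z => exchAt (x + y) p.2 (x + z))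
    - G y (fun z => p.1 (x + z)) (fun z => p.2 (x + z))) * h p.1 p.2

end Aux3

section Aux4

lemma keyF_aux (P μ : Measure (ℤ → ℝ)) [IsProbabilityMeasure P] [IsProbabilityMeasure μ]
    (F : ℤ → (ℤ → ℝ) → (ℤ → ℝ) → ℝ) (h : (ℤ → ℝ) → (ℤ → ℝ) → ℝ)
    (hh2 : MemLp (fun p : (ℤ → ℝ) × (ℤ → ℝ) => h p.1 p.2) 2 (P.prod μ))
    (x y : ℤ)
    (hflipρ : MeasurePreserving
      (fun p : (ℤ → ℝ) × (ℤ → ℝ) => (p.1, flipAt (x + y) p.2)) (P.prod μ) (P.prod μ))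
    (hflippinv : ∀ p : (ℤ → ℝ) × (ℤ → ℝ),
      ((fun q : (ℤ → ℝ) × (ℤ → ℝ) => (q.1, flipAt (x + y) q.2))
        ((fun q : (ℤ → ℝ) × (ℤ → ℝ) => (q.1, flipAt (x + y) q.2)) p)) = p)
    (hf1 : MemLp (fun p : (ℤ → ℝ) × (ℤ → ℝ) =>
        F y (fun z => p.1 (x + z)) (fun z => p.2 (x + z))) 2 (P.prod μ)) :
    |∫ p, termF F h x y p ∂(P.prod μ)|
      ≤ (eLpNorm (fun p : (ℤ → ℝ) × (ℤ → ℝ) =>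
            F y (fun z => p.1 (x + z)) (fun z => p.2 (x + z))) 2 (P.prod μ)).toReal
        * (eLpNorm (fun p : (ℤ → ℝ) × (ℤ → ℝ) =>
            h p.1 (flipAt (x + y) p.2) - h p.1 p.2) 2 (P.prod μ)).toReal :=
  key_step hflipρ hflippinv hf1 hh2

lemma keyG_aux (P μ : Measure (ℤ → ℝ)) [IsProbabilityMeasure P] [IsProbabilityMeasure μ]
    (G : ℤ → (ℤ → ℝ) → (ℤ → ℝ) → ℝ) (h : (ℤ → ℝ) → (ℤ → ℝ) → ℝ)
    (hh2 : MemLp (fun p : (ℤ → ℝ) × (ℤ → ℝ) => h p.1 p.2) 2 (P.prod μ))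
    (x y : ℤ)
    (hexchρ : MeasurePreserving
      (fun p : (ℤ → ℝ) × (ℤ → ℝ) => (p.1, exchAt (x + y) p.2)) (P.prod μ) (P.prod μ))
    (hexchpinv : ∀ p : (ℤ → ℝ) × (ℤ → ℝ),
      ((fun q : (ℤ → ℝ) × (ℤ → ℝ) => (q.1, exchAt (x + y) q.2))
        ((fun q : (ℤ → ℝ) × (ℤ → ℝ) => (q.1, exchAt (x + y) q.2)) p)) = p)
    (hf1 : MemLp (fun p : (ℤ → ℝ) × (ℤ → ℝ) =>
        G y (fun z => p.1 (x + z)) (fun z => p.2 (x + z))) 2 (P.prod μ)) :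
    |∫ p, termG G h x y p ∂(P.prod μ)|
      ≤ (eLpNorm (fun p : (ℤ → ℝ) × (ℤ → ℝ) =>
            G y (fun z => p.1 (x + z)) (fun z => p.2 (x + z))) 2 (P.prod μ)).toReal
        * (eLpNorm (fun p : (ℤ → ℝ) × (ℤ → ℝ) =>
            h p.1 (exchAt (x + y) p.2) - h p.1 p.2) 2 (P.prod μ)).toReal :=
  key_step hexchρ hexchpinv hf1 hh2

end Aux4

set_option maxHeartbeats 1000000 in
/-- Dirichlet bound. -/
theorem stmt4 (gam lam : ℝ) (hgam : 0 < gam) (hlam : 0 < lam)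
    (C : ℝ) (hC : 1 < C)
    (ν : Measure ℝ) [IsProbabilityMeasure ν] (hν : ν (Set.Icc C⁻¹ C)ᶜ = 0)
    (P : Measure (ℤ → ℝ)) [IsProbabilityMeasure P] (hP : IsIIDProduct P ν)
    (β : ℝ) (hβ : 0 < β)
    (μ : Measure (ℤ → ℝ)) [IsProbabilityMeasure μ]
    (hμ : IsIIDProduct μ (gaussianReal 0 (Real.toNNReal β⁻¹)))
    (s : ℤ) (hs : 1 ≤ s)
    (Λ : Finset ℤ) (hΛ : Λ ⊆ Finset.Icc (-s) s)
    (F G : ℤ → (ℤ → ℝ) → (ℤ → ℝ) → ℝ)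
    (hF2 : ∀ y ∈ Λ, MemLp (fun p : (ℤ → ℝ) × (ℤ → ℝ) => F y p.1 p.2) 2 (P.prod μ))
    (hG2 : ∀ y ∈ Λ, MemLp (fun p : (ℤ → ℝ) × (ℤ → ℝ) => G y p.1 p.2) 2 (P.prod μ))
    (hFcyl : ∀ y ∈ Λ, ∃ t : Finset ℤ, CylOn (F y) t)
    (hGcyl : ∀ y ∈ Λ, ∃ t : Finset ℤ, CylOn (G y) t)
    (φ : (ℤ → ℝ) → (ℤ → ℝ) → ℝ)
    (hφ : φ = fun m ω => ∑ y ∈ Λ,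
      ((F y m (flipAt y ω) - F y m ω) + (G y m (exchAt y ω) - G y m ω)))
    (hφcyl : CylOn φ (Finset.Icc (-s) s))
    (K : ℝ)
    (hK : K = ((2 * s + 1 : ℤ) : ℝ) *
      (Real.sqrt (2 / gam) *
          (⨆ y ∈ Λ, (eLpNorm (fun p : (ℤ → ℝ) × (ℤ → ℝ) => F y p.1 p.2) 2 (P.prod μ)).toReal)
        + Real.sqrt (2 / lam) *
          (⨆ y ∈ Λ, (eLpNorm (fun p : (ℤ → ℝ) × (ℤ → ℝ) => G y p.1 p.2) 2 (P.prod μ)).toReal)))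
    (l : ℤ) (hl : s + 1 ≤ l)
    (h : (ℤ → ℝ) → (ℤ → ℝ) → ℝ)
    (hh2 : MemLp (fun p : (ℤ → ℝ) × (ℤ → ℝ) => h p.1 p.2) 2 (P.prod μ))
    (hhcyl : CylOn h (Finset.Icc (-l) l)) :
    |Estar P μ (fun m ω =>
        (∑ x ∈ Finset.Icc (-(l - s - 1)) (l - s - 1), tau x φ m ω) * h m ω)|
      ≤ K * Real.sqrt ((2 * (l - s - 1) + 1 : ℤ) : ℝ) *
        Real.sqrt (∑ x ∈ Finset.Icc (-l) l,
          (gam / 2 * Estar P μ (fun m ω => (h m (flipAt x ω) - h m ω) ^ 2)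
            + lam / 2 * Estar P μ (fun m ω => (h m (exchAt x ω) - h m ω) ^ 2))) := by
  classical
  -- index sets
  set I : Finset ℤ := Finset.Icc (-(l - s - 1)) (l - s - 1) with hIdef
  set L : Finset ℤ := Finset.Icc (-l) l with hLdef
  -- measure preserving transformations of the product measure
  have hflipρ : ∀ z : ℤ, MeasurePreserving
      (fun p : (ℤ → ℝ) × (ℤ → ℝ) => (p.1, flipAt z p.2)) (P.prod μ) (P.prod μ) :=
    fun z => (MeasurePreserving.id P).prod (flip_preserving hμ z)
  have hexchρ : ∀ z : ℤ, MeasurePreserving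
      (fun p : (ℤ → ℝ) × (ℤ → ℝ) => (p.1, exchAt z p.2)) (P.prod μ) (P.prod μ) :=
    fun z => (MeasurePreserving.id P).prod (exch_preserving hμ z)
  have htrρ : ∀ x : ℤ, MeasurePreserving
      (fun p : (ℤ → ℝ) × (ℤ → ℝ) => ((fun z => p.1 (x + z)), (fun z => p.2 (x + z))))
      (P.prod μ) (P.prod μ) :=
    fun x => (trans_preserving hP x).prod (trans_preserving hμ x)
  -- involutions
  have hflipinv : ∀ (z : ℤ) (ω : ℤ → ℝ), flipAt z (flipAt z ω) = ω := by
    intro z ω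
    funext w
    simp only [flipAt_eq]
    by_cases hw : w = z <;> simp [hw]
  have hexchinv : ∀ (z : ℤ) (ω : ℤ → ℝ), exchAt z (exchAt z ω) = ω := by
    intro z ω
    funext w
    have hne : z + 1 ≠ z := by omega
    by_cases h1 : w = z <;> by_cases h2 : w = z + 1 <;>
      simp [exchAt, h1, h2, hne]
  have hflippinv : ∀ (z : ℤ) (p : (ℤ → ℝ) × (ℤ → ℝ)),
      ((fun q : (ℤ → ℝ) × (ℤ → ℝ) => (q.1, flipAt z q.2))
        ((fun q : (ℤ → ℝ) × (ℤ → ℝ) => (q.1, flipAt z q.2)) p)) = p := by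
    intro z p
    simp [hflipinv]
  have hexchpinv : ∀ (z : ℤ) (p : (ℤ → ℝ) × (ℤ → ℝ)),
      ((fun q : (ℤ → ℝ) × (ℤ → ℝ) => (q.1, exchAt z q.2))
        ((fun q : (ℤ → ℝ) × (ℤ → ℝ) => (q.1, exchAt z q.2)) p)) = p := by
    intro z p
    simp [hexchinv]
  -- L² membership of the h-differences
  have hdf : ∀ z : ℤ, MemLp
      (fun p : (ℤ → ℝ) × (ℤ → ℝ) => h p.1 (flipAt z p.2) - h p.1 p.2) 2 (P.prod μ) :=
    fun z => (hh2.comp_measurePreserving (hflipρ z)).sub hh2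
  have hde : ∀ z : ℤ, MemLp
      (fun p : (ℤ → ℝ) × (ℤ → ℝ) => h p.1 (exchAt z p.2) - h p.1 p.2) 2 (P.prod μ) :=
    fun z => (hh2.comp_measurePreserving (hexchρ z)).sub hh2
  set aa : ℤ → ℝ := fun z =>
    (eLpNorm (fun p : (ℤ → ℝ) × (ℤ → ℝ) => h p.1 (flipAt z p.2) - h p.1 p.2) 2
      (P.prod μ)).toReal with haa
  set bb : ℤ → ℝ := fun z =>
    (eLpNorm (fun p : (ℤ → ℝ) × (ℤ → ℝ) => h p.1 (exchAt z p.2) - h p.1 p.2) 2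
      (P.prod μ)).toReal with hbb
  have haa0 : ∀ z, 0 ≤ aa z := fun z => ENNReal.toReal_nonneg
  have hbb0 : ∀ z, 0 ≤ bb z := fun z => ENNReal.toReal_nonneg
  have haasq : ∀ z : ℤ,
      Estar P μ (fun m ω => (h m (flipAt z ω) - h m ω) ^ 2) = aa z ^ 2 :=
    fun z => (sq_eLpNorm_eq (hdf z)).symm
  have hbbsq : ∀ z : ℤ,
      Estar P μ (fun m ω => (h m (exchAt z ω) - h m ω) ^ 2) = bb z ^ 2 :=
    fun z => (sq_eLpNorm_eq (hde z)).symm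
  set D : ℝ := ∑ z ∈ L, (gam / 2 * aa z ^ 2 + lam / 2 * bb z ^ 2) with hD
  have hgoalD : (∑ x ∈ L,
      (gam / 2 * Estar P μ (fun m ω => (h m (flipAt x ω) - h m ω) ^ 2)
        + lam / 2 * Estar P μ (fun m ω => (h m (exchAt x ω) - h m ω) ^ 2))) = D := by
    rw [hD]
    exact Finset.sum_congr rfl fun z _ => by rw [haasq z, hbbsq z]
  -- suprema
  set MF : ℝ := ⨆ y ∈ Λ,
    (eLpNorm (fun p : (ℤ → ℝ) × (ℤ → ℝ) => F y p.1 p.2) 2 (P.prod μ)).toReal with hMFdef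
  set MG : ℝ := ⨆ y ∈ Λ,
    (eLpNorm (fun p : (ℤ → ℝ) × (ℤ → ℝ) => G y p.1 p.2) 2 (P.prod μ)).toReal with hMGdef
  have hbsF : (∀ y ∈ Λ,
      (eLpNorm (fun p : (ℤ → ℝ) × (ℤ → ℝ) => F y p.1 p.2) 2 (P.prod μ)).toReal ≤ MF)
      ∧ 0 ≤ MF :=
    biSup_bounds (fun y => ENNReal.toReal_nonneg) Λ
  have hbsG : (∀ y ∈ Λ,
      (eLpNorm (fun p : (ℤ → ℝ) × (ℤ → ℝ) => G y p.1 p.2) 2 (P.prod μ)).toReal ≤ MG)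
      ∧ 0 ≤ MG :=
    biSup_bounds (fun y => ENNReal.toReal_nonneg) Λ
  obtain ⟨hMFle, hMF0⟩ := hbsF
  obtain ⟨hMGle, hMG0⟩ := hbsG
  -- integrability of each summand
  have intF : ∀ (x : ℤ), ∀ y ∈ Λ, Integrable (termF F h x y) (P.prod μ) := by
    intro x y hy
    have hf1 : MemLp (fun p : (ℤ → ℝ) × (ℤ → ℝ) =>
        F y (fun z => p.1 (x + z)) (fun z => p.2 (x + z))) 2 (P.prod μ) :=
      (hF2 y hy).comp_measurePreserving (htrρ x)
    have hf2 : MemLp (fun p : (ℤ → ℝ) × (ℤ → ℝ) =>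
        F y (fun z => p.1 (x + z)) (fun z => flipAt (x + y) p.2 (x + z))) 2 (P.prod μ) :=
      hf1.comp_measurePreserving (hflipρ (x + y))
    exact integrable_mul_L2 (hf2.sub hf1) hh2
  have intG : ∀ (x : ℤ), ∀ y ∈ Λ, Integrable (termG G h x y) (P.prod μ) := by
    intro x y hy
    have hf1 : MemLp (fun p : (ℤ → ℝ) × (ℤ → ℝ) =>
        G y (fun z => p.1 (x + z)) (fun z => p.2 (x + z))) 2 (P.prod μ) :=
      (hG2 y hy).comp_measurePreserving (htrρ x)
    have hf2 : MemLp (fun p : (ℤ → ℝ) × (ℤ → ℝ) =>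
        G y (fun z => p.1 (x + z)) (fun z => exchAt (x + y) p.2 (x + z))) 2 (P.prod μ) :=
      hf1.comp_measurePreserving (hexchρ (x + y))
    exact integrable_mul_L2 (hf2.sub hf1) hh2
  -- the key per-term estimates
  have keyF : ∀ (x : ℤ), ∀ y ∈ Λ,
      |∫ p, termF F h x y p ∂(P.prod μ)| ≤ MF * aa (x + y) := by
    intro x y hy
    have hf1 : MemLp (fun p : (ℤ → ℝ) × (ℤ → ℝ) =>
        F y (fun z => p.1 (x + z)) (fun z => p.2 (x + z))) 2 (P.prod μ) :=
      (hF2 y hy).comp_measurePreserving (htrρ x)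
    have h1 := keyF_aux P μ F h hh2 x y (hflipρ (x + y)) (hflippinv (x + y)) hf1
    simp only [haa]
    have h4 : eLpNorm (fun p : (ℤ → ℝ) × (ℤ → ℝ) =>
        F y (fun z => p.1 (x + z)) (fun z => p.2 (x + z))) 2 (P.prod μ)
        = eLpNorm ((fun p : (ℤ → ℝ) × (ℤ → ℝ) => F y p.1 p.2) ∘
            (fun p : (ℤ → ℝ) × (ℤ → ℝ) =>
              ((fun z => p.1 (x + z)), (fun z => p.2 (x + z))))) 2 (P.prod μ) := rfl
    have h3 : eLpNorm ((fun p : (ℤ → ℝ) × (ℤ → ℝ) => F y p.1 p.2) ∘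
            (fun p : (ℤ → ℝ) × (ℤ → ℝ) =>
              ((fun z => p.1 (x + z)), (fun z => p.2 (x + z))))) 2 (P.prod μ)
        = eLpNorm (fun p : (ℤ → ℝ) × (ℤ → ℝ) => F y p.1 p.2) 2 (P.prod μ) :=
      eLpNorm_comp_measurePreserving (hF2 y hy).aestronglyMeasurable (htrρ x)
    rw [h4, h3] at h1
    exact le_trans h1 (mul_le_mul_of_nonneg_right (hMFle y hy) ENNReal.toReal_nonneg)
  have keyG : ∀ (x : ℤ), ∀ y ∈ Λ,
      |∫ p, termG G h x y p ∂(P.prod μ)| ≤ MG * bb (x + y) := by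
    intro x y hy
    have hf1 : MemLp (fun p : (ℤ → ℝ) × (ℤ → ℝ) =>
        G y (fun z => p.1 (x + z)) (fun z => p.2 (x + z))) 2 (P.prod μ) :=
      (hG2 y hy).comp_measurePreserving (htrρ x)
    have h1 := keyG_aux P μ G h hh2 x y (hexchρ (x + y)) (hexchpinv (x + y)) hf1
    simp only [hbb]
    have h4 : eLpNorm (fun p : (ℤ → ℝ) × (ℤ → ℝ) =>
        G y (fun z => p.1 (x + z)) (fun z => p.2 (x + z))) 2 (P.prod μ)
        = eLpNorm ((fun p : (ℤ → ℝ) × (ℤ → ℝ) => G y p.1 p.2) ∘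
            (fun p : (ℤ → ℝ) × (ℤ → ℝ) =>
              ((fun z => p.1 (x + z)), (fun z => p.2 (x + z))))) 2 (P.prod μ) := rfl
    have h3 : eLpNorm ((fun p : (ℤ → ℝ) × (ℤ → ℝ) => G y p.1 p.2) ∘
            (fun p : (ℤ → ℝ) × (ℤ → ℝ) =>
              ((fun z => p.1 (x + z)), (fun z => p.2 (x + z))))) 2 (P.prod μ)
        = eLpNorm (fun p : (ℤ → ℝ) × (ℤ → ℝ) => G y p.1 p.2) 2 (P.prod μ) :=
      eLpNorm_comp_measurePreserving (hG2 y hy).aestronglyMeasurable (htrρ x)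
    rw [h4, h3] at h1
    exact le_trans h1 (mul_le_mul_of_nonneg_right (hMGle y hy) ENNReal.toReal_nonneg)
  -- expansion of the integral
  have expand : Estar P μ (fun m ω => (∑ x ∈ I, tau x φ m ω) * h m ω)
      = ∑ x ∈ I, ∑ y ∈ Λ,
          ((∫ p, termF F h x y p ∂(P.prod μ)) + ∫ p, termG G h x y p ∂(P.prod μ)) := by
    have hpt : ∀ p : (ℤ → ℝ) × (ℤ → ℝ),
        (∑ x ∈ I, tau x φ p.1 p.2) * h p.1 p.2
          = ∑ x ∈ I, ∑ y ∈ Λ, (termF F h x y p + termG G h x y p) := by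
      intro p
      rw [Finset.sum_mul]
      refine Finset.sum_congr rfl fun x _ => ?_
      have htau : tau x φ p.1 p.2 = ∑ y ∈ Λ,
          ((F y (fun z => p.1 (x + z)) (fun z => flipAt (x + y) p.2 (x + z))
              - F y (fun z => p.1 (x + z)) (fun z => p.2 (x + z)))
            + (G y (fun z => p.1 (x + z)) (fun z => exchAt (x + y) p.2 (x + z))
              - G y (fun z => p.1 (x + z)) (fun z => p.2 (x + z)))) := by
        simp only [tau, hφ]
        exact Finset.sum_congr rfl fun y _ => by rw [flip_tau, exch_tau]
      rw [htau, Finset.sum_mul]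
      exact Finset.sum_congr rfl fun y _ => by simp only [termF, termG]; ring
    have hmeasEq : Estar P μ (fun m ω => (∑ x ∈ I, tau x φ m ω) * h m ω)
        = ∫ p, ∑ x ∈ I, ∑ y ∈ Λ, (termF F h x y p + termG G h x y p) ∂(P.prod μ) :=
      integral_congr_ae (Filter.Eventually.of_forall fun p => hpt p)
    have hint0 : ∀ (x : ℤ), ∀ y ∈ Λ,
        Integrable (fun p => termF F h x y p + termG G h x y p) (P.prod μ) :=
      fun x y hy => (intF x y hy).add (intG x y hy)
    have hint1 : ∀ x ∈ I, Integrable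
        (fun p : (ℤ → ℝ) × (ℤ → ℝ) => ∑ y ∈ Λ, (termF F h x y p + termG G h x y p))
        (P.prod μ) :=
      fun x _ => integrable_finset_sum Λ (fun y hy => hint0 x y hy)
    rw [hmeasEq, integral_finset_sum I hint1]
    refine Finset.sum_congr rfl fun x _ => ?_
    rw [integral_finset_sum Λ (fun y hy => hint0 x y hy)]
    exact Finset.sum_congr rfl fun y hy => integral_add (intF x y hy) (intG x y hy)
  -- cardinalities
  have hsub : ∀ x ∈ I, ∀ y ∈ Λ, x + y ∈ L := by
    intro x hx y hy
    rw [hIdef] at hx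
    have hy' := hΛ hy
    rw [Finset.mem_Icc] at hx hy' ⊢
    omega
  have hcard : ((Λ.card : ℕ) : ℝ) ≤ ((2 * s + 1 : ℤ) : ℝ) := by
    have h1 : Λ.card ≤ (Finset.Icc (-s) s).card := Finset.card_le_card hΛ
    have h2 : (Finset.Icc (-s) s).card = (2 * s + 1 : ℤ).toNat := by
      rw [Int.card_Icc]; congr 1; ring
    have h3 : ((2 * s + 1 : ℤ).toNat : ℤ) = 2 * s + 1 := Int.toNat_of_nonneg (by omega)
    have h4 : (Λ.card : ℤ) ≤ 2 * s + 1 := by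
      rw [← h3]; exact_mod_cast h1.trans_eq h2
    exact_mod_cast h4
  have hIcard : ((I.card : ℕ) : ℝ) = ((2 * (l - s - 1) + 1 : ℤ) : ℝ) := by
    have h1 : I.card = (2 * (l - s - 1) + 1 : ℤ).toNat := by
      rw [hIdef, Int.card_Icc]; congr 1; ring
    have h3 : ((2 * (l - s - 1) + 1 : ℤ).toNat : ℤ) = 2 * (l - s - 1) + 1 :=
      Int.toNat_of_nonneg (by omega)
    rw [h1]
    exact_mod_cast congrArg (Int.cast : ℤ → ℝ) h3
  -- sqrt comparisons
  have hAD : (∑ z ∈ L, aa z ^ 2) ≤ 2 / gam * D := by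
    have h1 : gam / 2 * ∑ z ∈ L, aa z ^ 2 ≤ D := by
      rw [hD, Finset.mul_sum]
      refine Finset.sum_le_sum fun z _ => ?_
      have h2 : 0 ≤ lam / 2 * bb z ^ 2 := mul_nonneg (by linarith) (sq_nonneg _)
      linarith
    have h2 : (∑ z ∈ L, aa z ^ 2) = 2 / gam * (gam / 2 * ∑ z ∈ L, aa z ^ 2) := by
      field_simp
    rw [h2]
    exact mul_le_mul_of_nonneg_left h1 (by positivity)
  have hBD : (∑ z ∈ L, bb z ^ 2) ≤ 2 / lam * D := by
    have h1 : lam / 2 * ∑ z ∈ L, bb z ^ 2 ≤ D := by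
      rw [hD, Finset.mul_sum]
      refine Finset.sum_le_sum fun z _ => ?_
      have h2 : 0 ≤ gam / 2 * aa z ^ 2 := mul_nonneg (by linarith) (sq_nonneg _)
      linarith
    have h2 : (∑ z ∈ L, bb z ^ 2) = 2 / lam * (lam / 2 * ∑ z ∈ L, bb z ^ 2) := by
      field_simp
    rw [h2]
    exact mul_le_mul_of_nonneg_left h1 (by positivity)
  have hSA : Real.sqrt (∑ z ∈ L, aa z ^ 2) ≤ Real.sqrt (2 / gam) * Real.sqrt D := by
    rw [← Real.sqrt_mul (by positivity : (0:ℝ) ≤ 2 / gam)]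
    exact Real.sqrt_le_sqrt hAD
  have hSB : Real.sqrt (∑ z ∈ L, bb z ^ 2) ≤ Real.sqrt (2 / lam) * Real.sqrt D := by
    rw [← Real.sqrt_mul (by positivity : (0:ℝ) ≤ 2 / lam)]
    exact Real.sqrt_le_sqrt hBD
  have hsqI : (0:ℝ) ≤ Real.sqrt (I.card : ℝ) := Real.sqrt_nonneg _
  have hsqD : (0:ℝ) ≤ Real.sqrt D := Real.sqrt_nonneg _
  -- final chain
  rw [hgoalD]
  calc |Estar P μ (fun m ω => (∑ x ∈ I, tau x φ m ω) * h m ω)|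
      = |∑ x ∈ I, ∑ y ∈ Λ,
          ((∫ p, termF F h x y p ∂(P.prod μ)) + ∫ p, termG G h x y p ∂(P.prod μ))| := by
        rw [expand]
    _ ≤ ∑ x ∈ I, |∑ y ∈ Λ,
          ((∫ p, termF F h x y p ∂(P.prod μ)) + ∫ p, termG G h x y p ∂(P.prod μ))| :=
        Finset.abs_sum_le_sum_abs _ _
    _ ≤ ∑ x ∈ I, ∑ y ∈ Λ,
          |(∫ p, termF F h x y p ∂(P.prod μ)) + ∫ p, termG G h x y p ∂(P.prod μ)| :=
        Finset.sum_le_sum fun x _ => Finset.abs_sum_le_sum_abs _ _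
    _ ≤ ∑ x ∈ I, ∑ y ∈ Λ, (MF * aa (x + y) + MG * bb (x + y)) :=
        Finset.sum_le_sum fun x _ => Finset.sum_le_sum fun y hy =>
          le_trans (abs_add_le _ _) (add_le_add (keyF x y hy) (keyG x y hy))
    _ = (∑ x ∈ I, ∑ y ∈ Λ, MF * aa (x + y)) + ∑ x ∈ I, ∑ y ∈ Λ, MG * bb (x + y) := by
        rw [← Finset.sum_add_distrib]
        exact Finset.sum_congr rfl fun x _ => Finset.sum_add_distrib
    _ ≤ (Λ.card : ℝ) * MF * Real.sqrt (I.card : ℝ) * Real.sqrt (∑ z ∈ L, aa z ^ 2)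
        + (Λ.card : ℝ) * MG * Real.sqrt (I.card : ℝ) * Real.sqrt (∑ z ∈ L, bb z ^ 2) :=
        add_le_add (sum_bound I Λ L hsub aa haa0 MF hMF0)
          (sum_bound I Λ L hsub bb hbb0 MG hMG0)
    _ ≤ (Λ.card : ℝ) * MF * Real.sqrt (I.card : ℝ) * (Real.sqrt (2 / gam) * Real.sqrt D)
        + (Λ.card : ℝ) * MG * Real.sqrt (I.card : ℝ) * (Real.sqrt (2 / lam) * Real.sqrt D) :=
        add_le_add
          (mul_le_mul_of_nonneg_left hSA
            (mul_nonneg (mul_nonneg (by positivity) hMF0) hsqI))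
          (mul_le_mul_of_nonneg_left hSB
            (mul_nonneg (mul_nonneg (by positivity) hMG0) hsqI))
    _ ≤ ((2 * s + 1 : ℤ) : ℝ) * MF * Real.sqrt (I.card : ℝ)
          * (Real.sqrt (2 / gam) * Real.sqrt D)
        + ((2 * s + 1 : ℤ) : ℝ) * MG * Real.sqrt (I.card : ℝ)
          * (Real.sqrt (2 / lam) * Real.sqrt D) :=
        add_le_add
          (mul_le_mul_of_nonneg_right
            (mul_le_mul_of_nonneg_right (mul_le_mul_of_nonneg_right hcard hMF0) hsqI)
            (mul_nonneg (Real.sqrt_nonneg _) hsqD))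
          (mul_le_mul_of_nonneg_right
            (mul_le_mul_of_nonneg_right (mul_le_mul_of_nonneg_right hcard hMG0) hsqI)
            (mul_nonneg (Real.sqrt_nonneg _) hsqD))
    _ = K * Real.sqrt ((2 * (l - s - 1) + 1 : ℤ) : ℝ) * Real.sqrt D := by
        rw [hK, ← hIcard]
        ring


end
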